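/- Let Q₀ be a cube and b locally integrable. For every x ∈ Q₀, the iterated commutator applied to (χ_{Q₀}, χ_{Q₀}) satisfies [Πb⃗, 𝓜](χ_{Q₀}, χ_{Q₀})(x) = (b(x) − M_{Q₀}(b)(x))², where b⃗ = (b,b) and M_{Q₀}(b)(x) = sup_{Q₀ ⊇ Q ∋ x} (1/|Q|)∫_Q |b|. -/
import Mathlib


open MeasureTheory ENNReal NNReal

noncomputable section

abbrev Rn (n : ℕ) := Fin n → ℝ

variable {n : ℕ}

/-- A cube in ℝⁿ: a closed ball in the sup norm, with center `c` and half side-length `r`. -/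
def Cube (c : Rn n) (r : ℝ) : Set (Rn n) := Metric.closedBall c r

/-- Average of an `ℝ≥0∞`-valued function over a cube. -/
def cubeAvgE (g : Rn n → ℝ≥0∞) (c : Rn n) (r : ℝ) : ℝ≥0∞ :=
  (∫⁻ y in Cube c r, g y) / volume (Cube c r)

/-- Average of a real-valued function over a cube. -/
def cubeAvg (f : Rn n → ℝ) (c : Rn n) (r : ℝ) : ℝ :=
  (∫ y in Cube c r, f y) / (volume (Cube c r)).toReal

/-- ω-measure of a cube. -/
def wVol (ω : Rn n → ℝ) (c : Rn n) (r : ℝ) : ℝ≥0∞ :=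
  ∫⁻ y in Cube c r, ENNReal.ofReal (ω y)

/-- The bilinear Hardy–Littlewood maximal function 𝓜. -/
def biM (f₁ f₂ : Rn n → ℝ) (x : Rn n) : ℝ≥0∞ :=
  ⨆ (c : Rn n) (r : ℝ) (_ : 0 < r) (_ : x ∈ Cube c r),
    cubeAvgE (fun y => ENNReal.ofReal |f₁ y|) c r *
      cubeAvgE (fun y => ENNReal.ofReal |f₂ y|) c r

/-- The local maximal function M_{Q₀}, over subcubes of Q₀ = Cube c₀ r₀ containing x. -/
def locM (c₀ : Rn n) (r₀ : ℝ) (b : Rn n → ℝ) (x : Rn n) : ℝ≥0∞ :=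
  ⨆ (c : Rn n) (r : ℝ) (_ : 0 < r) (_ : x ∈ Cube c r) (_ : Cube c r ⊆ Cube c₀ r₀),
    cubeAvgE (fun y => ENNReal.ofReal |b y|) c r

/-- Maximal function of an `ℝ≥0∞`-valued function. -/
def eM (g : Rn n → ℝ≥0∞) (x : Rn n) : ℝ≥0∞ :=
  ⨆ (c : Rn n) (r : ℝ) (_ : 0 < r) (_ : x ∈ Cube c r), cubeAvgE g c r

/-- The Hardy–Littlewood maximal function M. -/
def HLM (f : Rn n → ℝ) : Rn n → ℝ≥0∞ := eM (fun y => ENNReal.ofReal |f y|)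

/-- The weighted maximal function M_{ω,s} = (M_ω(|f|^s))^{1/s}. -/
def wM (s : ℝ) (ω f : Rn n → ℝ) (x : Rn n) : ℝ≥0∞ :=
  (⨆ (c : Rn n) (r : ℝ) (_ : 0 < r) (_ : x ∈ Cube c r),
    (∫⁻ y in Cube c r, ENNReal.ofReal |f y| ^ s * ENNReal.ofReal (ω y)) / wVol ω c r) ^ (1 / s)

/-- Weighted L^p norm of an `ℝ≥0∞`-valued function. -/
def wNormE (p : ℝ) (ω : Rn n → ℝ) (g : Rn n → ℝ≥0∞) : ℝ≥0∞ :=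
  (∫⁻ x, g x ^ p * ENNReal.ofReal (ω x)) ^ (1 / p)

/-- Weighted L^p norm of a real-valued function. -/
def wNorm (p : ℝ) (ω f : Rn n → ℝ) : ℝ≥0∞ :=
  wNormE p ω fun x => ENNReal.ofReal |f x|

/-- Maximal commutator 𝓜^{(1)}_b. -/
def Mc1 (b f₁ f₂ : Rn n → ℝ) (x : Rn n) : ℝ≥0∞ :=
  ⨆ (c : Rn n) (r : ℝ) (_ : 0 < r) (_ : x ∈ Cube c r),
    (∫⁻ y₁ in Cube c r, ∫⁻ y₂ in Cube c r,
      ENNReal.ofReal |b x - b y₁| * (ENNReal.ofReal |f₁ y₁| * ENNReal.ofReal |f₂ y₂|)) /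
      volume (Cube c r) ^ 2

/-- Maximal commutator 𝓜^{(2)}_b. -/
def Mc2 (b f₁ f₂ : Rn n → ℝ) (x : Rn n) : ℝ≥0∞ :=
  ⨆ (c : Rn n) (r : ℝ) (_ : 0 < r) (_ : x ∈ Cube c r),
    (∫⁻ y₁ in Cube c r, ∫⁻ y₂ in Cube c r,
      ENNReal.ofReal |b x - b y₂| * (ENNReal.ofReal |f₁ y₁| * ENNReal.ofReal |f₂ y₂|)) /
      volume (Cube c r) ^ 2

/-- The maximal linear commutator 𝓜_{Σb⃗} for b⃗ = (b,b). -/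
def MSigma (b f₁ f₂ : Rn n → ℝ) (x : Rn n) : ℝ≥0∞ := Mc1 b f₁ f₂ x + Mc2 b f₁ f₂ x

/-- The maximal iterated commutator 𝓜_{Πb⃗} for b⃗ = (b,b). -/
def MPi (b f₁ f₂ : Rn n → ℝ) (x : Rn n) : ℝ≥0∞ :=
  ⨆ (c : Rn n) (r : ℝ) (_ : 0 < r) (_ : x ∈ Cube c r),
    (∫⁻ y₁ in Cube c r, ∫⁻ y₂ in Cube c r,
      ENNReal.ofReal |b x - b y₁| * ENNReal.ofReal |b x - b y₂| *
        (ENNReal.ofReal |f₁ y₁| * ENNReal.ofReal |f₂ y₂|)) /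
      volume (Cube c r) ^ 2

/-- The negative part b⁻ = -min{b,0}. -/
def bminus (b : Rn n → ℝ) (x : Rn n) : ℝ := max (-b x) 0

/-- The linear commutator [Σb⃗,𝓜] = [b,𝓜]^{(1)} + [b,𝓜]^{(2)}, b⃗ = (b,b). -/
def commSigma (b f₁ f₂ : Rn n → ℝ) (x : Rn n) : ℝ :=
  (b x * (biM f₁ f₂ x).toReal - (biM (fun y => b y * f₁ y) f₂ x).toReal) +
  (b x * (biM f₁ f₂ x).toReal - (biM f₁ (fun y => b y * f₂ y) x).toReal)

/-- The iterated commutator [Πb⃗,𝓜], b⃗ = (b,b). -/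
def commPi (b f₁ f₂ : Rn n → ℝ) (x : Rn n) : ℝ :=
  b x ^ 2 * (biM f₁ f₂ x).toReal - b x * (biM f₁ (fun y => b y * f₂ y) x).toReal
    - b x * (biM (fun y => b y * f₁ y) f₂ x).toReal
    + (biM (fun y => b y * f₁ y) (fun y => b y * f₂ y) x).toReal

/-- The weighted BMO^q(ω) norm. -/
def bmoNorm (q : ℝ) (ω b : Rn n → ℝ) : ℝ≥0∞ :=
  ⨆ (c : Rn n) (r : ℝ) (_ : 0 < r),
    ((∫⁻ y in Cube c r,
        ENNReal.ofReal |b y - cubeAvg b c r| ^ q * ENNReal.ofReal (ω y) ^ (1 - q)) /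
      wVol ω c r) ^ (1 / q)

/-- The Muckenhoupt class A₁. -/
def IsA1 (ω : Rn n → ℝ) : Prop :=
  Measurable ω ∧ (∀ x, 0 ≤ ω x) ∧ (∀ᵐ x ∂(volume : Measure (Rn n)), 0 < ω x) ∧
    LocallyIntegrable ω ∧
    ∃ C > (0 : ℝ), ∀ (c : Rn n) (r : ℝ), 0 < r →
      wVol ω c r / volume (Cube c r) ≤
        ENNReal.ofReal C * essInf (fun y => ENNReal.ofReal (ω y)) (volume.restrict (Cube c r))

/-- The Muckenhoupt class A_q, 1 < q < ∞. -/
def IsAq (q : ℝ) (ω : Rn n → ℝ) : Prop :=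
  Measurable ω ∧ (∀ x, 0 ≤ ω x) ∧ (∀ᵐ x ∂(volume : Measure (Rn n)), 0 < ω x) ∧
    LocallyIntegrable ω ∧
    ∃ C : ℝ, ∀ (c : Rn n) (r : ℝ), 0 < r →
      (wVol ω c r / volume (Cube c r)) *
        ((∫⁻ y in Cube c r, ENNReal.ofReal (ω y) ^ (-(1 / (q - 1)))) /
          volume (Cube c r)) ^ (q - 1) ≤ ENNReal.ofReal C

/-- A_∞ = ∪_{1 ≤ q < ∞} A_q. -/
def IsAinfty (ω : Rn n → ℝ) : Prop := IsA1 ω ∨ ∃ q > (1 : ℝ), IsAq q ω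

/-- The Fefferman–Stein sharp maximal function M^♯. -/
def sharpM (g : Rn n → ℝ) (x : Rn n) : ℝ≥0∞ :=
  ⨆ (c : Rn n) (r : ℝ) (_ : 0 < r) (_ : x ∈ Cube c r),
    (∫⁻ y in Cube c r, ENNReal.ofReal |g y - cubeAvg g c r|) / volume (Cube c r)

/-- M^♯_δ(g) = (M^♯(|g|^δ))^{1/δ}. -/
def sharpMd (δ : ℝ) (g : Rn n → ℝ) (x : Rn n) : ℝ≥0∞ :=
  sharpM (fun y => |g y| ^ δ) x ^ (1 / δ)

/-- The characteristic function of the cube Q = Cube c r. -/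
def chi (c : Rn n) (r : ℝ) : Rn n → ℝ := (Cube c r).indicator fun _ => 1

end

namespace Stmt10Aux

open MeasureTheory ENNReal Set

variable {n : ℕ}

lemma cube_meas {c : Rn n} {r : ℝ} : MeasurableSet (Cube c r) :=
  measurableSet_closedBall

lemma cube_vol_pos {c : Rn n} {r : ℝ} (hr : 0 < r) : 0 < volume (Cube c r) := by
  rw [Cube, Real.volume_pi_closedBall c hr.le]
  exact ENNReal.ofReal_pos.2 (by positivity)

lemma cube_vol_ne_top {c : Rn n} {r : ℝ} : volume (Cube c r) ≠ ⊤ :=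
  (measure_closedBall_lt_top).ne

lemma cube_vol_mono {c c' : Rn n} {r r' : ℝ} (h0 : 0 ≤ r') (h : r' ≤ r) :
    volume (Cube c' r') ≤ volume (Cube c r) := by
  rw [Cube, Cube, Real.volume_pi_closedBall c' h0, Real.volume_pi_closedBall c (h0.trans h)]
  exact ENNReal.ofReal_le_ofReal (pow_le_pow_left₀ (by linarith) (by linarith) _)

lemma mem_cube_iff {c : Rn n} {r : ℝ} (hr : 0 ≤ r) {y : Rn n} :
    y ∈ Cube c r ↔ ∀ i, |y i - c i| ≤ r := by
  rw [Cube, Metric.mem_closedBall, dist_pi_le_iff hr]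
  simp [Real.dist_eq]

lemma avg_chi (c₀ : Rn n) (r₀ : ℝ) (c : Rn n) (r : ℝ) :
    cubeAvgE (fun y => ENNReal.ofReal |chi c₀ r₀ y|) c r
      = volume (Cube c r ∩ Cube c₀ r₀) / volume (Cube c r) := by
  unfold cubeAvgE
  congr 1
  have h : ∀ y, ENNReal.ofReal |chi c₀ r₀ y| = (Cube c₀ r₀).indicator (fun _ => 1) y := by
    intro y
    unfold chi
    by_cases h : y ∈ Cube c₀ r₀ <;> simp [Set.indicator, h]
  simp only [h]
  rw [lintegral_indicator cube_meas, Measure.restrict_restrict cube_meas,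
    setLIntegral_one, Set.inter_comm]

lemma avg_bchi (b : Rn n → ℝ) (c₀ : Rn n) (r₀ : ℝ) (c : Rn n) (r : ℝ) :
    cubeAvgE (fun y => ENNReal.ofReal |b y * chi c₀ r₀ y|) c r
      = (∫⁻ y in Cube c r ∩ Cube c₀ r₀, ENNReal.ofReal |b y|) / volume (Cube c r) := by
  unfold cubeAvgE
  congr 1
  have h : ∀ y, ENNReal.ofReal |b y * chi c₀ r₀ y|
      = (Cube c₀ r₀).indicator (fun z => ENNReal.ofReal |b z|) y := by
    intro y
    unfold chi
    by_cases h : y ∈ Cube c₀ r₀ <;> simp [Set.indicator, h, abs_mul]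
  simp only [h]
  rw [lintegral_indicator cube_meas, Measure.restrict_restrict cube_meas, Set.inter_comm]

/-- Key geometric lemma: any cube Q containing x can be replaced by a subcube of Q₀
containing x, containing Q ∩ Q₀, of radius ≤ that of Q. -/
lemma key (c₀ : Rn n) {r₀ : ℝ} (hr₀ : 0 < r₀) (c : Rn n) {r : ℝ} (hr : 0 < r)
    {x : Rn n} (hx0 : x ∈ Cube c₀ r₀) (hx : x ∈ Cube c r) :
    ∃ (c' : Rn n) (r' : ℝ), 0 < r' ∧ r' ≤ r ∧ x ∈ Cube c' r' ∧
      Cube c' r' ⊆ Cube c₀ r₀ ∧ Cube c r ∩ Cube c₀ r₀ ⊆ Cube c' r' := by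
  rcases le_total r₀ r with h | h
  · exact ⟨c₀, r₀, hr₀, h, hx0, subset_rfl, Set.inter_subset_right⟩
  · set c' : Rn n := fun i => min (max (c i) (c₀ i - r₀ + r)) (c₀ i + r₀ - r) with hc'
    have hc'bound : ∀ i, |c' i - c₀ i| ≤ r₀ - r := by
      intro i
      rw [abs_le]
      constructor
      · have h1 : c₀ i - r₀ + r ≤ min (max (c i) (c₀ i - r₀ + r)) (c₀ i + r₀ - r) :=
          le_min (le_max_right _ _) (by linarith)
        have : c' i = min (max (c i) (c₀ i - r₀ + r)) (c₀ i + r₀ - r) := rfl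
        rw [this]
        linarith
      · have h1 := min_le_right (max (c i) (c₀ i - r₀ + r)) (c₀ i + r₀ - r)
        have : c' i = min (max (c i) (c₀ i - r₀ + r)) (c₀ i + r₀ - r) := rfl
        rw [this]
        linarith
    have hsub : Cube c' r ⊆ Cube c₀ r₀ := by
      intro y hy
      rw [mem_cube_iff hr.le] at hy
      rw [mem_cube_iff hr₀.le]
      intro i
      calc |y i - c₀ i| ≤ |y i - c' i| + |c' i - c₀ i| := abs_sub_le _ _ _
        _ ≤ r + (r₀ - r) := add_le_add (hy i) (hc'bound i)
        _ = r₀ := by ring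
    have hsub2 : Cube c r ∩ Cube c₀ r₀ ⊆ Cube c' r := by
      rintro y ⟨hy1, hy2⟩
      rw [mem_cube_iff hr.le] at hy1
      rw [mem_cube_iff hr₀.le] at hy2
      rw [mem_cube_iff hr.le]
      intro i
      have h1 := abs_le.1 (hy1 i)
      have h2 := abs_le.1 (hy2 i)
      rw [abs_le]
      rcases le_total (c i) (c₀ i - r₀ + r) with hA | hA
      · have : c' i = c₀ i - r₀ + r := by
          simp only [hc']
          rw [max_eq_right hA, min_eq_left (by linarith)]
        rw [this]; constructor <;> linarith
      · rcases le_total (c i) (c₀ i + r₀ - r) with hB | hB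
        · have : c' i = c i := by
            simp only [hc']
            rw [max_eq_left hA, min_eq_left hB]
          rw [this]; constructor <;> linarith
        · have : c' i = c₀ i + r₀ - r := by
            simp only [hc']
            rw [max_eq_left hA, min_eq_right hB]
          rw [this]; constructor <;> linarith
    exact ⟨c', r, hr, le_rfl, hsub2 ⟨hx, hx0⟩, hsub, hsub2⟩


variable {b : Rn n → ℝ} {c₀ : Rn n} {r₀ : ℝ} {x : Rn n}

lemma div_le_one' {a v : ℝ≥0∞} (h : a ≤ v) : a / v ≤ 1 :=
  le_trans (ENNReal.div_le_div_right h _) ENNReal.div_self_le_one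

lemma biM_chi_chi (hr₀ : 0 < r₀) (hx : x ∈ Cube c₀ r₀) :
    biM (chi c₀ r₀) (chi c₀ r₀) x = 1 := by
  apply le_antisymm
  · unfold biM
    simp only [iSup_le_iff]
    intro c r hr hxc
    rw [avg_chi]
    have h1 : volume (Cube c r ∩ Cube c₀ r₀) / volume (Cube c r) ≤ 1 :=
      div_le_one' (measure_mono Set.inter_subset_left)
    exact mul_le_one' h1 h1
  · have h1 : cubeAvgE (fun y => ENNReal.ofReal |chi c₀ r₀ y|) c₀ r₀ *
        cubeAvgE (fun y => ENNReal.ofReal |chi c₀ r₀ y|) c₀ r₀ = 1 := by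
      rw [avg_chi, Set.inter_self, ENNReal.div_self (cube_vol_pos hr₀).ne' cube_vol_ne_top,
        one_mul]
    rw [← h1]
    exact le_iSup_of_le c₀ (le_iSup_of_le r₀ (le_iSup_of_le hr₀ (le_iSup_of_le hx le_rfl)))

lemma biM_bchi_chi (hr₀ : 0 < r₀) (hx : x ∈ Cube c₀ r₀) :
    biM (fun y => b y * chi c₀ r₀ y) (chi c₀ r₀) x = locM c₀ r₀ b x := by
  apply le_antisymm
  · unfold biM
    simp only [iSup_le_iff]
    intro c r hr hxc
    rw [avg_bchi, avg_chi]
    obtain ⟨c', r', hr', hr'le, hx', hsubQ, hsub2⟩ := key c₀ hr₀ c hr hx hxc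
    have h1 : (∫⁻ y in Cube c r ∩ Cube c₀ r₀, ENNReal.ofReal |b y|) / volume (Cube c r)
        ≤ cubeAvgE (fun y => ENNReal.ofReal |b y|) c' r' :=
      ENNReal.div_le_div (lintegral_mono_set hsub2) (cube_vol_mono hr'.le hr'le)
    have h2 : volume (Cube c r ∩ Cube c₀ r₀) / volume (Cube c r) ≤ 1 :=
      div_le_one' (measure_mono Set.inter_subset_left)
    calc _ ≤ cubeAvgE (fun y => ENNReal.ofReal |b y|) c' r' * 1 := mul_le_mul' h1 h2
      _ = cubeAvgE (fun y => ENNReal.ofReal |b y|) c' r' := mul_one _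
      _ ≤ locM c₀ r₀ b x := le_iSup_of_le c' (le_iSup_of_le r' (le_iSup_of_le hr'
            (le_iSup_of_le hx' (le_iSup_of_le hsubQ le_rfl))))
  · unfold locM
    simp only [iSup_le_iff]
    intro c r hr hxc hsubQ
    have h1 : cubeAvgE (fun y => ENNReal.ofReal |b y * chi c₀ r₀ y|) c r *
        cubeAvgE (fun y => ENNReal.ofReal |chi c₀ r₀ y|) c r
        = cubeAvgE (fun y => ENNReal.ofReal |b y|) c r := by
      rw [avg_bchi, avg_chi, Set.inter_eq_left.2 hsubQ,
        ENNReal.div_self (cube_vol_pos hr).ne' cube_vol_ne_top, mul_one]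
      rfl
    rw [← h1]
    exact le_iSup_of_le c (le_iSup_of_le r (le_iSup_of_le hr (le_iSup_of_le hxc le_rfl)))

lemma biM_chi_bchi (hr₀ : 0 < r₀) (hx : x ∈ Cube c₀ r₀) :
    biM (chi c₀ r₀) (fun y => b y * chi c₀ r₀ y) x = locM c₀ r₀ b x := by
  apply le_antisymm
  · unfold biM
    simp only [iSup_le_iff]
    intro c r hr hxc
    rw [avg_bchi, avg_chi]
    obtain ⟨c', r', hr', hr'le, hx', hsubQ, hsub2⟩ := key c₀ hr₀ c hr hx hxc
    have h1 : (∫⁻ y in Cube c r ∩ Cube c₀ r₀, ENNReal.ofReal |b y|) / volume (Cube c r)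
        ≤ cubeAvgE (fun y => ENNReal.ofReal |b y|) c' r' :=
      ENNReal.div_le_div (lintegral_mono_set hsub2) (cube_vol_mono hr'.le hr'le)
    have h2 : volume (Cube c r ∩ Cube c₀ r₀) / volume (Cube c r) ≤ 1 :=
      div_le_one' (measure_mono Set.inter_subset_left)
    calc _ ≤ (1:ℝ≥0∞) * cubeAvgE (fun y => ENNReal.ofReal |b y|) c' r' := mul_le_mul' h2 h1
      _ = cubeAvgE (fun y => ENNReal.ofReal |b y|) c' r' := one_mul _
      _ ≤ locM c₀ r₀ b x := le_iSup_of_le c' (le_iSup_of_le r' (le_iSup_of_le hr'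
            (le_iSup_of_le hx' (le_iSup_of_le hsubQ le_rfl))))
  · unfold locM
    simp only [iSup_le_iff]
    intro c r hr hxc hsubQ
    have h1 : cubeAvgE (fun y => ENNReal.ofReal |chi c₀ r₀ y|) c r *
        cubeAvgE (fun y => ENNReal.ofReal |b y * chi c₀ r₀ y|) c r
        = cubeAvgE (fun y => ENNReal.ofReal |b y|) c r := by
      rw [avg_bchi, avg_chi, Set.inter_eq_left.2 hsubQ,
        ENNReal.div_self (cube_vol_pos hr).ne' cube_vol_ne_top, one_mul]
      rfl
    rw [← h1]
    exact le_iSup_of_le c (le_iSup_of_le r (le_iSup_of_le hr (le_iSup_of_le hxc le_rfl)))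

lemma locavg_le_biM (hr : 0 < r₀) : ∀ (c : Rn n) (r : ℝ), 0 < r → x ∈ Cube c r →
    Cube c r ⊆ Cube c₀ r₀ →
    cubeAvgE (fun y => ENNReal.ofReal |b y|) c r * cubeAvgE (fun y => ENNReal.ofReal |b y|) c r
      ≤ biM (fun y => b y * chi c₀ r₀ y) (fun y => b y * chi c₀ r₀ y) x := by
  intro c r hrr hxc hsubQ
  have h1 : cubeAvgE (fun y => ENNReal.ofReal |b y * chi c₀ r₀ y|) c r
      = cubeAvgE (fun y => ENNReal.ofReal |b y|) c r := by
    rw [avg_bchi, Set.inter_eq_left.2 hsubQ]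
    rfl
  have h2 : cubeAvgE (fun y => ENNReal.ofReal |b y|) c r *
      cubeAvgE (fun y => ENNReal.ofReal |b y|) c r
      = cubeAvgE (fun y => ENNReal.ofReal |b y * chi c₀ r₀ y|) c r *
        cubeAvgE (fun y => ENNReal.ofReal |b y * chi c₀ r₀ y|) c r := by rw [h1]
  rw [h2]
  exact le_iSup_of_le c (le_iSup_of_le r (le_iSup_of_le hrr (le_iSup_of_le hxc le_rfl)))

lemma biM_bchi_bchi (hr₀ : 0 < r₀) (hx : x ∈ Cube c₀ r₀) :
    biM (fun y => b y * chi c₀ r₀ y) (fun y => b y * chi c₀ r₀ y) x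
      = locM c₀ r₀ b x ^ 2 := by
  apply le_antisymm
  · unfold biM
    simp only [iSup_le_iff]
    intro c r hr hxc
    rw [avg_bchi]
    obtain ⟨c', r', hr', hr'le, hx', hsubQ, hsub2⟩ := key c₀ hr₀ c hr hx hxc
    have h1 : (∫⁻ y in Cube c r ∩ Cube c₀ r₀, ENNReal.ofReal |b y|) / volume (Cube c r)
        ≤ cubeAvgE (fun y => ENNReal.ofReal |b y|) c' r' :=
      ENNReal.div_le_div (lintegral_mono_set hsub2) (cube_vol_mono hr'.le hr'le)
    have h3 : cubeAvgE (fun y => ENNReal.ofReal |b y|) c' r' ≤ locM c₀ r₀ b x :=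
      le_iSup_of_le c' (le_iSup_of_le r' (le_iSup_of_le hr'
        (le_iSup_of_le hx' (le_iSup_of_le hsubQ le_rfl))))
    rw [sq]
    exact mul_le_mul' (h1.trans h3) (h1.trans h3)
  · rw [sq]
    unfold locM
    simp only [ENNReal.iSup_mul, ENNReal.mul_iSup, iSup_le_iff]
    intro c r hr hxc hsubQ c' r' hr' hxc' hsubQ'
    rcases le_total (cubeAvgE (fun y => ENNReal.ofReal |b y|) c r)
      (cubeAvgE (fun y => ENNReal.ofReal |b y|) c' r') with h | h
    · calc _ ≤ cubeAvgE (fun y => ENNReal.ofReal |b y|) c' r' *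
            cubeAvgE (fun y => ENNReal.ofReal |b y|) c' r' := mul_le_mul' le_rfl h
        _ ≤ _ := locavg_le_biM hr₀ c' r' hr' hxc' hsubQ'
    · calc _ ≤ cubeAvgE (fun y => ENNReal.ofReal |b y|) c r *
            cubeAvgE (fun y => ENNReal.ofReal |b y|) c r := mul_le_mul' h le_rfl
        _ ≤ _ := locavg_le_biM hr₀ c r hr hxc hsubQ

end Stmt10Aux

/-- [Πb⃗,𝓜](χ_{Q₀},χ_{Q₀})(x) = (b(x) - M_{Q₀}(b)(x))² for x ∈ Q₀. -/
theorem stmt10 {n : ℕ} (b : Rn n → ℝ) (hb : LocallyIntegrable b)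
    (c₀ : Rn n) (r₀ : ℝ) (hr₀ : 0 < r₀) (x : Rn n) (hx : x ∈ Cube c₀ r₀) :
    commPi b (chi c₀ r₀) (chi c₀ r₀) x = (b x - (locM c₀ r₀ b x).toReal) ^ 2 := by
  unfold commPi
  rw [Stmt10Aux.biM_chi_chi hr₀ hx, Stmt10Aux.biM_bchi_chi hr₀ hx,
    Stmt10Aux.biM_chi_bchi hr₀ hx, Stmt10Aux.biM_bchi_bchi hr₀ hx,
    ENNReal.toReal_one, ENNReal.toReal_pow]
  ring
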